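/- arXiv:2111.01565 — 4 statements merged into one kernel-verified Lean document; each statement's English description precedes it below -/
import Mathlib

section
/- The reduction map GL_d(ℤ) → GL_d(ℤ/4ℤ) is injective on finite subgroups; that is, if G is a finite subgroup of GL_d(ℤ) and g ∈ G reduces to the identity modulo 4, then g is the identity. -/
open Matrix

theorem aux_pow {R : Type*} [Ring R] (b : R) (hb : b * b = 0) (n : ℕ) :
    (1 + b) ^ n = 1 + n * b := by
  induction n with
  | zero => simp
  | succ n ih =>
    rw [pow_succ, ih]
    have h1 : (n : R) * b * b = (n : R) * (b * b) := mul_assoc _ _ _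
    push_cast
    rw [mul_one_add, one_add_mul, h1, hb, mul_zero, add_zero, add_mul, one_mul, add_assoc]

theorem aux_key {d : ℕ} (p : ℕ) (hp : p.Prime) (M : Matrix (Fin d) (Fin d) ℤ)
    (hM : M ^ p = 1) (h4 : ∀ i j, (4 : ℤ) ∣ (M - 1) i j) : M = 1 := by
  set B : Matrix (Fin d) (Fin d) ℤ := M - 1 with hB
  have hMB : M = 1 + B := by rw [hB]; abel
  have main : ∀ k, ∀ i j, ((2 : ℤ) ^ (k + 2)) ∣ B i j := by
    intro k
    induction k with
    | zero => intro i j; simpa using h4 i j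
    | succ k ih =>
      intro i j
      set K := k + 2 with hK
      set N := 2 ^ (2 * K) with hN
      haveI : NeZero N := ⟨by positivity⟩
      set f : ℤ →+* ZMod N := Int.castRingHom (ZMod N) with hf
      set B' : Matrix (Fin d) (Fin d) (ZMod N) := f.mapMatrix B with hB'
      have hdvd2 : ∀ a b : Fin d, (N : ℤ) ∣ (B * B) a b := by
        intro a b
        rw [Matrix.mul_apply]
        apply Finset.dvd_sum
        intro l _
        have h2KK : ((N : ℕ) : ℤ) = 2 ^ K * 2 ^ K := by
          rw [hN]; push_cast; rw [← pow_add, two_mul]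
        rw [h2KK]
        exact mul_dvd_mul (ih a l) (ih l b)
      have hB2 : B' * B' = 0 := by
        rw [hB', ← _root_.map_mul]
        ext a b
        simp only [RingHom.mapMatrix_apply, Matrix.map_apply, Matrix.zero_apply,
          Int.coe_castRingHom, hf]
        exact (ZMod.intCast_zmod_eq_zero_iff_dvd _ N).mpr (hdvd2 a b)
      have hpow : (1 + B') ^ p = 1 := by
        have hmm : f.mapMatrix M = 1 + B' := by rw [hMB, _root_.map_add, _root_.map_one]
        rw [← hmm, ← _root_.map_pow, hM, _root_.map_one]
      have hpB : (p : Matrix (Fin d) (Fin d) (ZMod N)) * B' = 0 := by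
        have haux := aux_pow B' hB2 p
        rw [hpow] at haux
        exact (left_eq_add.mp haux)
      have hentry : (p : ZMod N) * B' i j = 0 := by
        have hc := congrFun (congrFun hpB i) j
        rw [← Matrix.diagonal_natCast, Matrix.diagonal_mul] at hc
        exact hc
      have hNdvd : (N : ℤ) ∣ (p : ℤ) * B i j := by
        rw [← ZMod.intCast_zmod_eq_zero_iff_dvd]
        push_cast
        simpa [hB', hf, RingHom.mapMatrix_apply, Matrix.map_apply] using hentry
      have h2K : (2 : ℤ) ^ (2 * K) = (N : ℤ) := by rw [hN]; push_cast; ring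
      rcases eq_or_ne p 2 with hp2 | hp2
      · have hdd : (2 : ℤ) * 2 ^ (2 * K - 1) ∣ 2 * B i j := by
          have hsplit : (2:ℤ) * 2 ^ (2*K-1) = 2 ^ (2*K) := by
            rw [show 2*K = 2*K-1+1 by omega, pow_succ']
            simp
          rw [hsplit, h2K]
          simpa [hp2] using hNdvd
        have h2 : (2 : ℤ) ^ (2 * K - 1) ∣ B i j :=
          (mul_dvd_mul_iff_left (by norm_num : (2:ℤ) ≠ 0)).mp hdd
        exact dvd_trans (pow_dvd_pow 2 (by omega)) h2
      · have hcop : Nat.Coprime p N := by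
          rw [hN]
          exact Nat.Coprime.pow_right _ ((Nat.coprime_primes hp Nat.prime_two).mpr hp2)
        have hu : IsUnit (p : ZMod N) := (ZMod.isUnit_iff_coprime p N).mpr hcop
        have hz : B' i j = 0 := by
          rcases hu with ⟨u, hu⟩
          rw [← hu] at hentry
          exact (Units.mul_right_eq_zero u).mp hentry
        have hNB : (N : ℤ) ∣ B i j := by
          rw [← ZMod.intCast_zmod_eq_zero_iff_dvd]
          simpa [hB', hf, RingHom.mapMatrix_apply, Matrix.map_apply] using hz
        exact dvd_trans (pow_dvd_pow 2 (by omega)) (h2K ▸ hNB)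
  have hB0 : B = 0 := by
    ext i j
    simp only [Matrix.zero_apply]
    by_contra hne
    have h1 : (2 : ℤ) ^ ((B i j).natAbs + 2) ≤ |B i j| := by
      apply Int.le_of_dvd (abs_pos.mpr hne)
      exact (dvd_abs _ _).mpr (main (B i j).natAbs i j)
    have h2 : |B i j| < 2 ^ ((B i j).natAbs + 2) := by
      rw [Int.abs_eq_natAbs]
      exact_mod_cast Nat.lt_of_lt_of_le (Nat.lt_two_pow_self (n := (B i j).natAbs))
        (Nat.pow_le_pow_right (by norm_num) (by omega))
    omega
  rw [hMB, hB0, add_zero]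

/-- The reduction map `GL_d(ℤ) → GL_d(ℤ/4ℤ)` is injective on finite subgroups:
if `g` is an element of finite order of `GL_d(ℤ)` (e.g. a member of a finite subgroup)
reducing to the identity modulo 4, then `g = 1`. -/
theorem stmt0 (d : ℕ) (G : Subgroup (GL (Fin d) ℤ)) (hG : Finite G)
    (g : GL (Fin d) ℤ) (hg : g ∈ G)
    (h : Units.map ((Int.castRingHom (ZMod 4)).mapMatrix.toMonoidHom) g = 1) :
    g = 1 := by
  have hfin : IsOfFinOrder g := by
    have h1 : IsOfFinOrder (⟨g, hg⟩ : G) := isOfFinOrder_of_finite _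
    exact Submonoid.isOfFinOrder_coe.mpr h1
  by_contra hne
  set n := orderOf g with hn
  have hn0 : n ≠ 0 := hfin.orderOf_pos.ne'
  have hn1 : n ≠ 1 := by
    intro h1
    exact hne (orderOf_eq_one_iff.mp h1)
  set q := n.minFac with hq'
  have hq : q.Prime := Nat.minFac_prime hn1
  set w : GL (Fin d) ℤ := g ^ (n / q) with hw
  have horder : orderOf w = q := orderOf_pow_orderOf_div hn0 (Nat.minFac_dvd n)
  have himg : Units.map ((Int.castRingHom (ZMod 4)).mapMatrix.toMonoidHom) w = 1 := by
    rw [hw, map_pow, h, one_pow]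
  have hMp : (w : Matrix (Fin d) (Fin d) ℤ) ^ q = 1 := by
    have : w ^ q = 1 := by rw [← horder]; exact pow_orderOf_eq_one w
    rw [← Units.val_pow_eq_pow_val, this, Units.val_one]
  have hmap : (w : Matrix (Fin d) (Fin d) ℤ).map (Int.cast : ℤ → ZMod 4) = 1 := by
    have := congrArg Units.val himg
    simpa [RingHom.mapMatrix_apply] using this
  have h4 : ∀ i j, (4 : ℤ) ∣ ((w : Matrix (Fin d) (Fin d) ℤ) - 1) i j := by
    intro i j
    have hc := congrFun (congrFun hmap i) j
    rw [show ((4:ℤ)) = ((4:ℕ):ℤ) by norm_num, ← ZMod.intCast_zmod_eq_zero_iff_dvd]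
    simp only [Matrix.map_apply, Matrix.sub_apply, Int.cast_sub] at hc ⊢
    rw [hc]
    rcases eq_or_ne i j with rfl | hij <;> simp_all [Matrix.one_apply]
  have hw1 : (w : Matrix (Fin d) (Fin d) ℤ) = 1 := aux_key q hq _ hMp h4
  have : w = 1 := Units.ext hw1
  rw [this, orderOf_one] at horder
  exact hq.one_lt.ne' horder.symm
end

section
/- If a finite subgroup G of GL_d(ℤ) contains a nontrivial element acting trivially modulo 2, then G has a nontrivial normal elementary abelian 2-subgroup, namely the kernel of the reduction G → GL_d(ℤ/2ℤ). -/
open Matrix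

lemma binom_aux {R : Type*} [Ring R] (X : R) (q : ℕ) :
    ∃ D : R, (1 + X) ^ q = 1 + X * (q : R) + X ^ 2 * D := by
  induction q with
  | zero => exact ⟨0, by simp⟩
  | succ n ih =>
    obtain ⟨D, hD⟩ := ih
    refine ⟨D + (n : R) * 1 + X * D, ?_⟩
    rw [pow_succ', hD]
    push_cast
    noncomm_ring

lemma lemA {d : ℕ} (C : Matrix (Fin d) (Fin d) ℤ) (m q : ℕ) (hm : 1 ≤ m) (hq : Odd q)
    (h : (1 + ((2:ℤ)^m) • C) ^ q = 1) : ∀ i j, 2 ∣ C i j := by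
  intro i j
  set X : Matrix (Fin d) (Fin d) ℤ := ((2:ℤ)^m) • C with hX
  obtain ⟨D, hD⟩ := binom_aux X q
  rw [h] at hD
  have h0 : X * (q : Matrix (Fin d) (Fin d) ℤ) + X ^ 2 * D = 0 := by
    rw [add_assoc] at hD
    exact (left_eq_add.mp hD)
  have hXq : X * (q : Matrix (Fin d) (Fin d) ℤ) = ((q:ℤ) * (2:ℤ)^m) • C := by
    rw [← (Nat.cast_commute q X).eq, ← nsmul_eq_mul, ← Nat.cast_smul_eq_nsmul ℤ, hX, smul_smul]
  have hXsq : X ^ 2 * D = ((2:ℤ)^m * (2:ℤ)^m) • (C * C * D) := by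
    rw [sq, hX, smul_mul_smul_comm, smul_mul_assoc]
  rw [hXq, hXsq] at h0
  have he := congrFun (congrFun h0 i) j
  simp only [Matrix.add_apply, Matrix.smul_apply, Matrix.zero_apply, smul_eq_mul] at he
  set e : ℤ := (C * C * D) i j with hee
  have h2m : (2:ℤ)^m ≠ 0 := by positivity
  have hcan : (q:ℤ) * C i j = -((2:ℤ)^m * e) := by
    have hfac : (2:ℤ)^m * ((q:ℤ) * C i j) = (2:ℤ)^m * (-((2:ℤ)^m * e)) := by
      linear_combination he
    exact mul_left_cancel₀ h2m hfac
  have h2 : (2:ℤ) ∣ (q:ℤ) * C i j := by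
    rw [hcan]
    exact ((dvd_pow_self (2:ℤ) (by omega)).mul_right e).neg_right
  rcases (Int.prime_two.dvd_mul.mp h2) with h' | h'
  · exfalso
    have hq2 : (2:ℕ) ∣ q := by exact_mod_cast h'
    have := Nat.odd_iff.mp hq
    omega
  · exact h'

lemma lemB {d : ℕ} (C : Matrix (Fin d) (Fin d) ℤ) (m : ℕ) (hm : 2 ≤ m) :
    ∃ C₂ : Matrix (Fin d) (Fin d) ℤ,
      (1 + ((2:ℤ)^m) • C) ^ 2 = 1 + ((2:ℤ)^(m+1)) • C₂ ∧ ∀ i j, 2 ∣ C₂ i j - C i j := by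
  set X : Matrix (Fin d) (Fin d) ℤ := ((2:ℤ)^m) • C with hX
  refine ⟨C + ((2:ℤ)^(m-1)) • (C * C), ?_, ?_⟩
  · have key : (2:ℤ)^(m+1) * (2:ℤ)^(m-1) = (2:ℤ)^m * (2:ℤ)^m := by
      rw [← pow_add, ← pow_add]; congr 1; omega
    have hXX : X * X = ((2:ℤ)^(m+1)) • (((2:ℤ)^(m-1)) • (C * C)) := by
      rw [hX, smul_mul_smul_comm, smul_smul, key]
    have hXpX : X + X = ((2:ℤ)^(m+1)) • C := by
      rw [hX, ← two_smul ℤ, smul_smul, ← pow_succ']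
    calc (1 + X)^2 = 1 + (X + X) + X * X := by noncomm_ring
    _ = 1 + ((2:ℤ)^(m+1)) • C + ((2:ℤ)^(m+1)) • (((2:ℤ)^(m-1)) • (C * C)) := by
        rw [hXpX, hXX]
    _ = 1 + ((2:ℤ)^(m+1)) • (C + ((2:ℤ)^(m-1)) • (C * C)) := by
        rw [smul_add, add_assoc]
  · intro i j
    simp only [Matrix.add_apply, Matrix.smul_apply, smul_eq_mul, add_sub_cancel_left]
    exact (dvd_pow_self (2:ℤ) (by omega : m - 1 ≠ 0)).mul_right _

lemma lemB_iter {d : ℕ} (C : Matrix (Fin d) (Fin d) ℤ) (m : ℕ) (hm : 2 ≤ m) (a : ℕ) :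
    ∃ Ca : Matrix (Fin d) (Fin d) ℤ,
      (1 + ((2:ℤ)^m) • C) ^ (2^a) = 1 + ((2:ℤ)^(m+a)) • Ca ∧ ∀ i j, 2 ∣ Ca i j - C i j := by
  induction a with
  | zero => exact ⟨C, by simp, fun i j => by simp⟩
  | succ n ih =>
    obtain ⟨Ca, hCa, hcong⟩ := ih
    obtain ⟨C₂, hC₂, hcong₂⟩ := lemB Ca (m + n) (by omega)
    refine ⟨C₂, ?_, fun i j => ?_⟩
    · rw [pow_succ, pow_mul, hCa, hC₂]
      ring_nf
    · have h1 := hcong₂ i j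
      have h2 := hcong i j
      have : C₂ i j - C i j = (C₂ i j - Ca i j) + (Ca i j - C i j) := by ring
      rw [this]
      exact dvd_add h1 h2

lemma lemC_even {d : ℕ} (n : ℕ) (hn : 0 < n) (C : Matrix (Fin d) (Fin d) ℤ) (m : ℕ)
    (hm : 2 ≤ m) (h : (1 + ((2:ℤ)^m) • C) ^ n = 1) : ∀ i j, 2 ∣ C i j := by
  intro i j
  obtain ⟨a, q, hq2, hnq⟩ := Nat.exists_eq_pow_mul_and_not_dvd (n := n) hn.ne' 2 (by norm_num)
  obtain ⟨Ca, hCa, hcong⟩ := lemB_iter C m hm a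
  have hq : Odd q := Nat.odd_iff.mpr (by omega)
  have hpow : (1 + ((2:ℤ)^(m+a)) • Ca) ^ q = 1 := by
    rw [← hCa, ← pow_mul, ← hnq, h]
  have h2 := lemA Ca (m + a) q (by omega) hq hpow i j
  have h3 := hcong i j
  omega

lemma lemC {d : ℕ} (n : ℕ) (hn : 0 < n) (C : Matrix (Fin d) (Fin d) ℤ) (m : ℕ)
    (hm : 2 ≤ m) (h : (1 + ((2:ℤ)^m) • C) ^ n = 1) : C = 0 := by
  have key : ∀ t : ℕ, ∀ i j, (2:ℤ)^t ∣ C i j := by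
    intro t
    induction t with
    | zero => intro i j; simp
    | succ t ih =>
      set C₀ : Matrix (Fin d) (Fin d) ℤ := Matrix.of fun i j => C i j / 2^t with hC₀
      have hC : C = ((2:ℤ)^t) • C₀ := by
        ext i j
        simp only [hC₀, Matrix.smul_apply, Matrix.of_apply, smul_eq_mul]
        exact (Int.mul_ediv_cancel' (ih i j)).symm
      have hsm : ((2:ℤ)^m) • C = ((2:ℤ)^(m+t)) • C₀ := by
        rw [hC, smul_smul, ← pow_add]
      rw [hsm] at h
      have h2 := lemC_even n hn C₀ (m + t) (by omega) h
      intro i j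
      have : C i j = (2:ℤ)^t * C₀ i j := by rw [hC]; simp [Matrix.smul_apply]
      rw [this, pow_succ]
      exact mul_dvd_mul (dvd_refl _) (h2 i j)
  ext i j
  simp only [Matrix.zero_apply]
  by_contra hne
  have habs : ∀ t : ℕ, (2:ℤ)^t ≤ |C i j| := fun t =>
    Int.le_of_dvd (abs_pos.mpr hne) ((dvd_abs _ _).mpr (key t i j))
  have h1 := habs (C i j).natAbs
  have h2 : ((C i j).natAbs : ℤ) < (2:ℤ)^(C i j).natAbs := by
    exact_mod_cast Nat.lt_two_pow_self (n := (C i j).natAbs)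
  rw [Int.abs_eq_natAbs] at h1
  omega

/-- If a finite subgroup `G ≤ GL_d(ℤ)` contains a nontrivial element acting trivially
modulo 2, then the kernel of the reduction `G → GL_d(ℤ/2ℤ)` is a nontrivial normal
subgroup of `G` which is elementary abelian of exponent 2. -/
theorem stmt2 (d : ℕ) (G : Subgroup (GL (Fin d) ℤ)) (hG : Finite G)
    (red : GL (Fin d) ℤ →* GL (Fin d) (ZMod 2))
    (hred : red = Units.map ((Int.castRingHom (ZMod 2)).mapMatrix.toMonoidHom))
    (hnt : ∃ g ∈ G, g ≠ 1 ∧ red g = 1) :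
    ((red.ker).subgroupOf G).Normal ∧
    (red.ker).subgroupOf G ≠ ⊥ ∧
    ∀ g : G, g ∈ (red.ker).subgroupOf G → g ≠ 1 → orderOf g = 2 := by
  refine ⟨Subgroup.normal_subgroupOf, ?_, ?_⟩
  · obtain ⟨g, hgG, hgne, hgred⟩ := hnt
    intro hbot
    have hx : (⟨g, hgG⟩ : G) ∈ (red.ker).subgroupOf G :=
      Subgroup.mem_subgroupOf.mpr (MonoidHom.mem_ker.mpr hgred)
    rw [hbot, Subgroup.mem_bot] at hx
    exact hgne (congrArg Subtype.val hx)
  · intro g hmem hgne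
    have hker : red (↑g : GL (Fin d) ℤ) = 1 :=
      MonoidHom.mem_ker.mp (Subgroup.mem_subgroupOf.mp hmem)
    set A : Matrix (Fin d) (Fin d) ℤ := ((g : GL (Fin d) ℤ) : Matrix (Fin d) (Fin d) ℤ) with hAdef
    -- entries of A - 1 are even
    have hmap : (Int.castRingHom (ZMod 2)).mapMatrix A = 1 := by
      have := congrArg Units.val hker
      rw [hred] at this
      simpa [Units.coe_map] using this
    have hdvd : ∀ i j, (2:ℤ) ∣ (A - 1) i j := by
      intro i j
      have h0 : (Int.castRingHom (ZMod 2)).mapMatrix (A - 1) = 0 := by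
        rw [map_sub, hmap, _root_.map_one, sub_self]
      have := congrFun (congrFun h0 i) j
      rw [RingHom.mapMatrix_apply, Matrix.map_apply] at this
      have h2 : (((A - 1) i j : ℤ) : ZMod 2) = 0 := by simpa using this
      exact_mod_cast (ZMod.intCast_zmod_eq_zero_iff_dvd _ 2).mp h2
    set C : Matrix (Fin d) (Fin d) ℤ := Matrix.of fun i j => (A - 1) i j / 2 with hCdef
    have hA : A = 1 + (2:ℤ) • C := by
      ext i j
      simp only [Matrix.add_apply, Matrix.smul_apply, Matrix.of_apply, smul_eq_mul, hCdef]
      have := Int.mul_ediv_cancel' (hdvd i j)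
      simp only [Matrix.sub_apply] at this ⊢
      omega
    -- A^2 = 1 + 4 (C + C^2)
    have hXpX : (2:ℤ) • C + (2:ℤ) • C = ((2:ℤ)^2) • C := by
      rw [← two_smul ℤ, smul_smul]; norm_num
    have hXX : ((2:ℤ) • C) * ((2:ℤ) • C) = ((2:ℤ)^2) • (C * C) := by
      rw [smul_mul_smul_comm]; norm_num
    have hA2 : A ^ 2 = 1 + ((2:ℤ)^2) • (C + C * C) := by
      calc A ^ 2 = 1 + ((2:ℤ) • C + (2:ℤ) • C) + ((2:ℤ) • C) * ((2:ℤ) • C) := by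
            rw [hA]; noncomm_ring
      _ = 1 + ((2:ℤ)^2) • C + ((2:ℤ)^2) • (C * C) := by rw [hXpX, hXX]
      _ = 1 + ((2:ℤ)^2) • (C + C * C) := by rw [smul_add, add_assoc]
    -- finite order
    haveI : Finite G := hG
    set n : ℕ := orderOf g with hndef
    have hn : 0 < n := orderOf_pos g
    have hgn : g ^ n = 1 := pow_orderOf_eq_one g
    have hAn : A ^ n = 1 := by
      have h1 : ((g : GL (Fin d) ℤ)) ^ n = 1 := by
        have := congrArg (Subtype.val) hgn
        push_cast at this
        exact_mod_cast this
      have := congrArg Units.val h1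
      rw [Units.val_pow_eq_pow_val] at this
      simpa using this
    have hpow : (1 + ((2:ℤ)^2) • (C + C * C)) ^ n = 1 := by
      rw [← hA2, ← pow_mul, mul_comm, pow_mul, hAn, one_pow]
    have hzero : C + C * C = 0 := lemC n hn (C + C * C) 2 le_rfl hpow
    have hA2one : A ^ 2 = 1 := by rw [hA2, hzero, smul_zero, add_zero]
    have hg2 : g ^ 2 = 1 := by
      have hGL : ((g : GL (Fin d) ℤ)) ^ 2 = 1 := by
        apply Units.ext
        rw [Units.val_pow_eq_pow_val]
        simpa using hA2one
      apply Subtype.ext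
      push_cast
      exact_mod_cast hGL
    exact orderOf_eq_prime hg2 hgne
end

section
/- In the quaternion algebra B = (D/m, m / ℚ) with i² = D/m, j² = m, k = ij, suppose 2 | D, m ≡ 3 mod 4, and D squarefree. Then O = ℤ + ½(1 + j + k)ℤ + ½(1 + j − k)ℤ + ½(i + k)ℤ is an order of B of reduced discriminant D. -/
open Quaternion

theorem det_fin_four'' {R : Type*} [CommRing R] (A : Matrix (Fin 4) (Fin 4) R) :
    A.det =
      A 0 0 * (A 1 1 * (A 2 2 * A 3 3 - A 2 3 * A 3 2) - A 1 2 * (A 2 1 * A 3 3 - A 2 3 * A 3 1)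
        + A 1 3 * (A 2 1 * A 3 2 - A 2 2 * A 3 1))
      - A 0 1 * (A 1 0 * (A 2 2 * A 3 3 - A 2 3 * A 3 2) - A 1 2 * (A 2 0 * A 3 3 - A 2 3 * A 3 0)
        + A 1 3 * (A 2 0 * A 3 2 - A 2 2 * A 3 0))
      + A 0 2 * (A 1 0 * (A 2 1 * A 3 3 - A 2 3 * A 3 1) - A 1 1 * (A 2 0 * A 3 3 - A 2 3 * A 3 0)
        + A 1 3 * (A 2 0 * A 3 1 - A 2 1 * A 3 0))
      - A 0 3 * (A 1 0 * (A 2 1 * A 3 2 - A 2 2 * A 3 1) - A 1 1 * (A 2 0 * A 3 2 - A 2 2 * A 3 0)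
        + A 1 2 * (A 2 0 * A 3 1 - A 2 1 * A 3 0)) := by
  rw [Matrix.det_succ_row_zero, Fin.sum_univ_four]
  simp only [Matrix.det_fin_three, Matrix.submatrix_apply,
    show ∀ i : Fin 3, Fin.succAbove (0 : Fin 4) i = i.succ from by decide,
    show Fin.succAbove (1 : Fin 4) (0 : Fin 3) = 0 from by decide,
    show Fin.succAbove (1 : Fin 4) (1 : Fin 3) = 2 from by decide,
    show Fin.succAbove (1 : Fin 4) (2 : Fin 3) = 3 from by decide,
    show Fin.succAbove (2 : Fin 4) (0 : Fin 3) = 0 from by decide,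
    show Fin.succAbove (2 : Fin 4) (1 : Fin 3) = 1 from by decide,
    show Fin.succAbove (2 : Fin 4) (2 : Fin 3) = 3 from by decide,
    show Fin.succAbove (3 : Fin 4) (0 : Fin 3) = 0 from by decide,
    show Fin.succAbove (3 : Fin 4) (1 : Fin 3) = 1 from by decide,
    show Fin.succAbove (3 : Fin 4) (2 : Fin 3) = 2 from by decide,
    show Fin.succ (0 : Fin 3) = 1 from rfl,
    show Fin.succ (1 : Fin 3) = 2 from rfl,
    show Fin.succ (2 : Fin 3) = 3 from rfl,
    show ((0 : Fin 4) : ℕ) = 0 from rfl,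
    show ((1 : Fin 4) : ℕ) = 1 from rfl,
    show ((2 : Fin 4) : ℕ) = 2 from rfl,
    show ((3 : Fin 4) : ℕ) = 3 from rfl]
  norm_num
  ring


/-- In the quaternion algebra `B = (D/m, m / ℚ)` (so `i² = D/m`, `j² = m`, `k = ij = -ji`)
with `D` positive squarefree, `m ∣ D`, `2 ∣ D` and `m ≡ 3 mod 4`, the lattice
`O = ℤ + ½(1+j+k)ℤ + ½(1+j-k)ℤ + ½(i+k)ℤ` is an order of `B` of reduced discriminant `D`:
it contains 1, is closed under multiplication, consists of elements integral over `ℤ`,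
is a full lattice (the four generators are a `ℚ`-basis of `B`), and the determinant of the
Gram matrix of reduced traces `trd(e_a ē_b)` has absolute value `D²`. -/
theorem stmt5 (D m : ℤ) (hD : 0 < D) (hsf : Squarefree D) (hm : m ∣ D)
    (hm4 : m % 4 = 3) (h2 : 2 ∣ D)
    (e : Fin 4 → ℍ[ℚ, ((D / m : ℤ) : ℚ), (m : ℚ)])
    (he : e = ![1, ⟨1/2, 0, 1/2, 1/2⟩, ⟨1/2, 0, 1/2, -(1/2)⟩, ⟨0, 1/2, 0, 1/2⟩]) :
    (1 : ℍ[ℚ, ((D / m : ℤ) : ℚ), (m : ℚ)]) ∈ Submodule.span ℤ (Set.range e) ∧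
    (∀ x ∈ Submodule.span ℤ (Set.range e), ∀ y ∈ Submodule.span ℤ (Set.range e),
      x * y ∈ Submodule.span ℤ (Set.range e)) ∧
    (∀ x ∈ Submodule.span ℤ (Set.range e), IsIntegral ℤ x) ∧
    LinearIndependent ℚ e ∧
    Submodule.span ℚ (Set.range e) = ⊤ ∧
    |(Matrix.of fun a b => 2 * (e a * star (e b)).re).det| = (D : ℚ) ^ 2 := by
  have hm0 : m ≠ 0 := by omega
  obtain ⟨n, hn⟩ := hm
  have hnot4 : ¬ (4 : ℤ) ∣ D := by
    intro h
    have := hsf 2 (by rwa [show (2:ℤ)*2 = 4 by norm_num])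
    norm_num [Int.isUnit_iff] at this
  have h2n : (2 : ℤ) ∣ n := by
    rcases (Int.prime_two.dvd_mul).mp (hn ▸ h2) with h | h
    · omega
    · exact h
  have h4n : ¬ (4 : ℤ) ∣ n := fun h => hnot4 (hn ▸ h.mul_left m)
  obtain ⟨s, hs⟩ : ∃ s, m = 4 * s + 3 := ⟨m / 4, by omega⟩
  obtain ⟨t, ht⟩ : ∃ t, n = 4 * t + 2 := ⟨n / 4, by omega⟩
  have hDm : (D / m : ℤ) = n := by rw [hn]; exact Int.mul_ediv_cancel_left n hm0
  have hc1 : ((D / m : ℤ) : ℚ) = 4 * (t : ℚ) + 2 := by rw [hDm, ht]; push_cast; ring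
  have hmQ : (m : ℚ) = 4 * (s : ℚ) + 3 := by rw [hs]; push_cast; ring
  have hone : (1 : ℍ[ℚ, ((D / m : ℤ) : ℚ), (m : ℚ)]) ∈ Submodule.span ℤ (Set.range e) := by
    apply Submodule.subset_span
    exact ⟨0, by rw [he]; rfl⟩
  have mem4 : ∀ (z0 z1 z2 z3 : ℤ) (x : ℍ[ℚ, ((D / m : ℤ) : ℚ), (m : ℚ)]),
      x = (z0 : ℚ) • e 0 + (z1 : ℚ) • e 1 + (z2 : ℚ) • e 2 + (z3 : ℚ) • e 3 →
      x ∈ Submodule.span ℤ (Set.range e) := by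
    intro z0 z1 z2 z3 x hx
    have h : ∀ i : Fin 4, e i ∈ Submodule.span ℤ (Set.range e) :=
      fun i => Submodule.subset_span ⟨i, rfl⟩
    rw [hx, Int.cast_smul_eq_zsmul, Int.cast_smul_eq_zsmul, Int.cast_smul_eq_zsmul,
      Int.cast_smul_eq_zsmul]
    exact add_mem (add_mem (add_mem (Submodule.smul_mem _ _ (h 0))
      (Submodule.smul_mem _ _ (h 1))) (Submodule.smul_mem _ _ (h 2)))
      (Submodule.smul_mem _ _ (h 3))
  have k00 : e 0 * e 0 ∈ Submodule.span ℤ (Set.range e) := by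
    refine mem4 1 0 0 0 _ ?_
    ext <;>
    · simp only [he, Matrix.cons_val_zero, Matrix.cons_val_one, Matrix.head_cons,
          Matrix.cons_val_two, Matrix.tail_cons, Matrix.cons_val_three,
          QuaternionAlgebra.re_mul, QuaternionAlgebra.imI_mul, QuaternionAlgebra.imJ_mul,
          QuaternionAlgebra.imK_mul, QuaternionAlgebra.re_add, QuaternionAlgebra.imI_add,
          QuaternionAlgebra.imJ_add, QuaternionAlgebra.imK_add, QuaternionAlgebra.re_smul,
          QuaternionAlgebra.imI_smul, QuaternionAlgebra.imJ_smul, QuaternionAlgebra.imK_smul,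
          QuaternionAlgebra.re_one, QuaternionAlgebra.imI_one, QuaternionAlgebra.imJ_one,
          QuaternionAlgebra.imK_one, smul_eq_mul, hc1, hmQ]
      try push_cast
      try ring
  have k01 : e 0 * e 1 ∈ Submodule.span ℤ (Set.range e) := by
    refine mem4 0 1 0 0 _ ?_
    ext <;>
    · simp only [he, Matrix.cons_val_zero, Matrix.cons_val_one, Matrix.head_cons,
          Matrix.cons_val_two, Matrix.tail_cons, Matrix.cons_val_three,
          QuaternionAlgebra.re_mul, QuaternionAlgebra.imI_mul, QuaternionAlgebra.imJ_mul,
          QuaternionAlgebra.imK_mul, QuaternionAlgebra.re_add, QuaternionAlgebra.imI_add,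
          QuaternionAlgebra.imJ_add, QuaternionAlgebra.imK_add, QuaternionAlgebra.re_smul,
          QuaternionAlgebra.imI_smul, QuaternionAlgebra.imJ_smul, QuaternionAlgebra.imK_smul,
          QuaternionAlgebra.re_one, QuaternionAlgebra.imI_one, QuaternionAlgebra.imJ_one,
          QuaternionAlgebra.imK_one, smul_eq_mul, hc1, hmQ]
      try push_cast
      try ring
  have k02 : e 0 * e 2 ∈ Submodule.span ℤ (Set.range e) := by
    refine mem4 0 0 1 0 _ ?_
    ext <;>
    · simp only [he, Matrix.cons_val_zero, Matrix.cons_val_one, Matrix.head_cons,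
          Matrix.cons_val_two, Matrix.tail_cons, Matrix.cons_val_three,
          QuaternionAlgebra.re_mul, QuaternionAlgebra.imI_mul, QuaternionAlgebra.imJ_mul,
          QuaternionAlgebra.imK_mul, QuaternionAlgebra.re_add, QuaternionAlgebra.imI_add,
          QuaternionAlgebra.imJ_add, QuaternionAlgebra.imK_add, QuaternionAlgebra.re_smul,
          QuaternionAlgebra.imI_smul, QuaternionAlgebra.imJ_smul, QuaternionAlgebra.imK_smul,
          QuaternionAlgebra.re_one, QuaternionAlgebra.imI_one, QuaternionAlgebra.imJ_one,
          QuaternionAlgebra.imK_one, smul_eq_mul, hc1, hmQ]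
      try push_cast
      try ring
  have k03 : e 0 * e 3 ∈ Submodule.span ℤ (Set.range e) := by
    refine mem4 0 0 0 1 _ ?_
    ext <;>
    · simp only [he, Matrix.cons_val_zero, Matrix.cons_val_one, Matrix.head_cons,
          Matrix.cons_val_two, Matrix.tail_cons, Matrix.cons_val_three,
          QuaternionAlgebra.re_mul, QuaternionAlgebra.imI_mul, QuaternionAlgebra.imJ_mul,
          QuaternionAlgebra.imK_mul, QuaternionAlgebra.re_add, QuaternionAlgebra.imI_add,
          QuaternionAlgebra.imJ_add, QuaternionAlgebra.imK_add, QuaternionAlgebra.re_smul,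
          QuaternionAlgebra.imI_smul, QuaternionAlgebra.imJ_smul, QuaternionAlgebra.imK_smul,
          QuaternionAlgebra.re_one, QuaternionAlgebra.imI_one, QuaternionAlgebra.imJ_one,
          QuaternionAlgebra.imK_one, smul_eq_mul, hc1, hmQ]
      try push_cast
      try ring
  have k10 : e 1 * e 0 ∈ Submodule.span ℤ (Set.range e) := by
    refine mem4 0 1 0 0 _ ?_
    ext <;>
    · simp only [he, Matrix.cons_val_zero, Matrix.cons_val_one, Matrix.head_cons,
          Matrix.cons_val_two, Matrix.tail_cons, Matrix.cons_val_three,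
          QuaternionAlgebra.re_mul, QuaternionAlgebra.imI_mul, QuaternionAlgebra.imJ_mul,
          QuaternionAlgebra.imK_mul, QuaternionAlgebra.re_add, QuaternionAlgebra.imI_add,
          QuaternionAlgebra.imJ_add, QuaternionAlgebra.imK_add, QuaternionAlgebra.re_smul,
          QuaternionAlgebra.imI_smul, QuaternionAlgebra.imJ_smul, QuaternionAlgebra.imK_smul,
          QuaternionAlgebra.re_one, QuaternionAlgebra.imI_one, QuaternionAlgebra.imJ_one,
          QuaternionAlgebra.imK_one, smul_eq_mul, hc1, hmQ]
      try push_cast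
      try ring
  have k11 : e 1 * e 1 ∈ Submodule.span ℤ (Set.range e) := by
    refine mem4 (-1 + -1*s + -3*t + -4*t*s) 1 0 0 _ ?_
    ext <;>
    · simp only [he, Matrix.cons_val_zero, Matrix.cons_val_one, Matrix.head_cons,
          Matrix.cons_val_two, Matrix.tail_cons, Matrix.cons_val_three,
          QuaternionAlgebra.re_mul, QuaternionAlgebra.imI_mul, QuaternionAlgebra.imJ_mul,
          QuaternionAlgebra.imK_mul, QuaternionAlgebra.re_add, QuaternionAlgebra.imI_add,
          QuaternionAlgebra.imJ_add, QuaternionAlgebra.imK_add, QuaternionAlgebra.re_smul,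
          QuaternionAlgebra.imI_smul, QuaternionAlgebra.imJ_smul, QuaternionAlgebra.imK_smul,
          QuaternionAlgebra.re_one, QuaternionAlgebra.imI_one, QuaternionAlgebra.imJ_one,
          QuaternionAlgebra.imK_one, smul_eq_mul, hc1, hmQ]
      try push_cast
      try ring
  have k12 : e 1 * e 2 ∈ Submodule.span ℤ (Set.range e) := by
    refine mem4 (2 + 3*s + 3*t + 4*t*s) (-1 + -2*s) (2 + 2*s) (3 + 4*s) _ ?_
    ext <;>
    · simp only [he, Matrix.cons_val_zero, Matrix.cons_val_one, Matrix.head_cons,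
          Matrix.cons_val_two, Matrix.tail_cons, Matrix.cons_val_three,
          QuaternionAlgebra.re_mul, QuaternionAlgebra.imI_mul, QuaternionAlgebra.imJ_mul,
          QuaternionAlgebra.imK_mul, QuaternionAlgebra.re_add, QuaternionAlgebra.imI_add,
          QuaternionAlgebra.imJ_add, QuaternionAlgebra.imK_add, QuaternionAlgebra.re_smul,
          QuaternionAlgebra.imI_smul, QuaternionAlgebra.imJ_smul, QuaternionAlgebra.imK_smul,
          QuaternionAlgebra.re_one, QuaternionAlgebra.imI_one, QuaternionAlgebra.imJ_one,
          QuaternionAlgebra.imK_one, smul_eq_mul, hc1, hmQ]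
      try push_cast
      try ring
  have k13 : e 1 * e 3 ∈ Submodule.span ℤ (Set.range e) := by
    refine mem4 (-1 + -2*s + -2*t + -4*t*s) (1*s + -1*t) (-1 + -1*s + -1*t) (-1 + -2*s) _ ?_
    ext <;>
    · simp only [he, Matrix.cons_val_zero, Matrix.cons_val_one, Matrix.head_cons,
          Matrix.cons_val_two, Matrix.tail_cons, Matrix.cons_val_three,
          QuaternionAlgebra.re_mul, QuaternionAlgebra.imI_mul, QuaternionAlgebra.imJ_mul,
          QuaternionAlgebra.imK_mul, QuaternionAlgebra.re_add, QuaternionAlgebra.imI_add,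
          QuaternionAlgebra.imJ_add, QuaternionAlgebra.imK_add, QuaternionAlgebra.re_smul,
          QuaternionAlgebra.imI_smul, QuaternionAlgebra.imJ_smul, QuaternionAlgebra.imK_smul,
          QuaternionAlgebra.re_one, QuaternionAlgebra.imI_one, QuaternionAlgebra.imJ_one,
          QuaternionAlgebra.imK_one, smul_eq_mul, hc1, hmQ]
      try push_cast
      try ring
  have k20 : e 2 * e 0 ∈ Submodule.span ℤ (Set.range e) := by
    refine mem4 0 0 1 0 _ ?_
    ext <;>
    · simp only [he, Matrix.cons_val_zero, Matrix.cons_val_one, Matrix.head_cons,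
          Matrix.cons_val_two, Matrix.tail_cons, Matrix.cons_val_three,
          QuaternionAlgebra.re_mul, QuaternionAlgebra.imI_mul, QuaternionAlgebra.imJ_mul,
          QuaternionAlgebra.imK_mul, QuaternionAlgebra.re_add, QuaternionAlgebra.imI_add,
          QuaternionAlgebra.imJ_add, QuaternionAlgebra.imK_add, QuaternionAlgebra.re_smul,
          QuaternionAlgebra.imI_smul, QuaternionAlgebra.imJ_smul, QuaternionAlgebra.imK_smul,
          QuaternionAlgebra.re_one, QuaternionAlgebra.imI_one, QuaternionAlgebra.imJ_one,
          QuaternionAlgebra.imK_one, smul_eq_mul, hc1, hmQ]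
      try push_cast
      try ring
  have k21 : e 2 * e 1 ∈ Submodule.span ℤ (Set.range e) := by
    refine mem4 (2 + 3*s + 3*t + 4*t*s) (2 + 2*s) (-1 + -2*s) (-3 + -4*s) _ ?_
    ext <;>
    · simp only [he, Matrix.cons_val_zero, Matrix.cons_val_one, Matrix.head_cons,
          Matrix.cons_val_two, Matrix.tail_cons, Matrix.cons_val_three,
          QuaternionAlgebra.re_mul, QuaternionAlgebra.imI_mul, QuaternionAlgebra.imJ_mul,
          QuaternionAlgebra.imK_mul, QuaternionAlgebra.re_add, QuaternionAlgebra.imI_add,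
          QuaternionAlgebra.imJ_add, QuaternionAlgebra.imK_add, QuaternionAlgebra.re_smul,
          QuaternionAlgebra.imI_smul, QuaternionAlgebra.imJ_smul, QuaternionAlgebra.imK_smul,
          QuaternionAlgebra.re_one, QuaternionAlgebra.imI_one, QuaternionAlgebra.imJ_one,
          QuaternionAlgebra.imK_one, smul_eq_mul, hc1, hmQ]
      try push_cast
      try ring
  have k22 : e 2 * e 2 ∈ Submodule.span ℤ (Set.range e) := by
    refine mem4 (-1 + -1*s + -3*t + -4*t*s) 0 1 0 _ ?_
    ext <;>
    · simp only [he, Matrix.cons_val_zero, Matrix.cons_val_one, Matrix.head_cons,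
          Matrix.cons_val_two, Matrix.tail_cons, Matrix.cons_val_three,
          QuaternionAlgebra.re_mul, QuaternionAlgebra.imI_mul, QuaternionAlgebra.imJ_mul,
          QuaternionAlgebra.imK_mul, QuaternionAlgebra.re_add, QuaternionAlgebra.imI_add,
          QuaternionAlgebra.imJ_add, QuaternionAlgebra.imK_add, QuaternionAlgebra.re_smul,
          QuaternionAlgebra.imI_smul, QuaternionAlgebra.imJ_smul, QuaternionAlgebra.imK_smul,
          QuaternionAlgebra.re_one, QuaternionAlgebra.imI_one, QuaternionAlgebra.imJ_one,
          QuaternionAlgebra.imK_one, smul_eq_mul, hc1, hmQ]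
      try push_cast
      try ring
  have k23 : e 2 * e 3 ∈ Submodule.span ℤ (Set.range e) := by
    refine mem4 (1 + 2*s + 2*t + 4*t*s) (1 + 1*s + 1*t) (-1*s + 1*t) (-1 + -2*s) _ ?_
    ext <;>
    · simp only [he, Matrix.cons_val_zero, Matrix.cons_val_one, Matrix.head_cons,
          Matrix.cons_val_two, Matrix.tail_cons, Matrix.cons_val_three,
          QuaternionAlgebra.re_mul, QuaternionAlgebra.imI_mul, QuaternionAlgebra.imJ_mul,
          QuaternionAlgebra.imK_mul, QuaternionAlgebra.re_add, QuaternionAlgebra.imI_add,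
          QuaternionAlgebra.imJ_add, QuaternionAlgebra.imK_add, QuaternionAlgebra.re_smul,
          QuaternionAlgebra.imI_smul, QuaternionAlgebra.imJ_smul, QuaternionAlgebra.imK_smul,
          QuaternionAlgebra.re_one, QuaternionAlgebra.imI_one, QuaternionAlgebra.imJ_one,
          QuaternionAlgebra.imK_one, smul_eq_mul, hc1, hmQ]
      try push_cast
      try ring
  have k30 : e 3 * e 0 ∈ Submodule.span ℤ (Set.range e) := by
    refine mem4 0 0 0 1 _ ?_
    ext <;>
    · simp only [he, Matrix.cons_val_zero, Matrix.cons_val_one, Matrix.head_cons,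
          Matrix.cons_val_two, Matrix.tail_cons, Matrix.cons_val_three,
          QuaternionAlgebra.re_mul, QuaternionAlgebra.imI_mul, QuaternionAlgebra.imJ_mul,
          QuaternionAlgebra.imK_mul, QuaternionAlgebra.re_add, QuaternionAlgebra.imI_add,
          QuaternionAlgebra.imJ_add, QuaternionAlgebra.imK_add, QuaternionAlgebra.re_smul,
          QuaternionAlgebra.imI_smul, QuaternionAlgebra.imJ_smul, QuaternionAlgebra.imK_smul,
          QuaternionAlgebra.re_one, QuaternionAlgebra.imI_one, QuaternionAlgebra.imJ_one,
          QuaternionAlgebra.imK_one, smul_eq_mul, hc1, hmQ]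
      try push_cast
      try ring
  have k31 : e 3 * e 1 ∈ Submodule.span ℤ (Set.range e) := by
    refine mem4 (-2 + -2*s + -4*t + -4*t*s) (-1*s + 1*t) (1 + 1*s + 1*t) (2 + 2*s) _ ?_
    ext <;>
    · simp only [he, Matrix.cons_val_zero, Matrix.cons_val_one, Matrix.head_cons,
          Matrix.cons_val_two, Matrix.tail_cons, Matrix.cons_val_three,
          QuaternionAlgebra.re_mul, QuaternionAlgebra.imI_mul, QuaternionAlgebra.imJ_mul,
          QuaternionAlgebra.imK_mul, QuaternionAlgebra.re_add, QuaternionAlgebra.imI_add,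
          QuaternionAlgebra.imJ_add, QuaternionAlgebra.imK_add, QuaternionAlgebra.re_smul,
          QuaternionAlgebra.imI_smul, QuaternionAlgebra.imJ_smul, QuaternionAlgebra.imK_smul,
          QuaternionAlgebra.re_one, QuaternionAlgebra.imI_one, QuaternionAlgebra.imJ_one,
          QuaternionAlgebra.imK_one, smul_eq_mul, hc1, hmQ]
      try push_cast
      try ring
  have k32 : e 3 * e 2 ∈ Submodule.span ℤ (Set.range e) := by
    refine mem4 (2 + 2*s + 4*t + 4*t*s) (-1 + -1*s + -1*t) (1*s + -1*t) (2 + 2*s) _ ?_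
    ext <;>
    · simp only [he, Matrix.cons_val_zero, Matrix.cons_val_one, Matrix.head_cons,
          Matrix.cons_val_two, Matrix.tail_cons, Matrix.cons_val_three,
          QuaternionAlgebra.re_mul, QuaternionAlgebra.imI_mul, QuaternionAlgebra.imJ_mul,
          QuaternionAlgebra.imK_mul, QuaternionAlgebra.re_add, QuaternionAlgebra.imI_add,
          QuaternionAlgebra.imJ_add, QuaternionAlgebra.imK_add, QuaternionAlgebra.re_smul,
          QuaternionAlgebra.imI_smul, QuaternionAlgebra.imJ_smul, QuaternionAlgebra.imK_smul,
          QuaternionAlgebra.re_one, QuaternionAlgebra.imI_one, QuaternionAlgebra.imJ_one,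
          QuaternionAlgebra.imK_one, smul_eq_mul, hc1, hmQ]
      try push_cast
      try ring
  have k33 : e 3 * e 3 ∈ Submodule.span ℤ (Set.range e) := by
    refine mem4 (-1 + -2*s + -2*t + -4*t*s) 0 0 0 _ ?_
    ext <;>
    · simp only [he, Matrix.cons_val_zero, Matrix.cons_val_one, Matrix.head_cons,
          Matrix.cons_val_two, Matrix.tail_cons, Matrix.cons_val_three,
          QuaternionAlgebra.re_mul, QuaternionAlgebra.imI_mul, QuaternionAlgebra.imJ_mul,
          QuaternionAlgebra.imK_mul, QuaternionAlgebra.re_add, QuaternionAlgebra.imI_add,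
          QuaternionAlgebra.imJ_add, QuaternionAlgebra.imK_add, QuaternionAlgebra.re_smul,
          QuaternionAlgebra.imI_smul, QuaternionAlgebra.imJ_smul, QuaternionAlgebra.imK_smul,
          QuaternionAlgebra.re_one, QuaternionAlgebra.imI_one, QuaternionAlgebra.imJ_one,
          QuaternionAlgebra.imK_one, smul_eq_mul, hc1, hmQ]
      try push_cast
      try ring
  have key : ∀ a b : Fin 4, e a * e b ∈ Submodule.span ℤ (Set.range e) := by
    intro a b
    fin_cases a <;> fin_cases b
    exacts [k00, k01, k02, k03, k10, k11, k12, k13, k20, k21, k22, k23,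
      k30, k31, k32, k33]
  have hmul : ∀ x ∈ Submodule.span ℤ (Set.range e), ∀ y ∈ Submodule.span ℤ (Set.range e),
      x * y ∈ Submodule.span ℤ (Set.range e) := by
    intro x hx
    induction hx using Submodule.span_induction with
    | mem a ha =>
      intro y hy
      induction hy using Submodule.span_induction with
      | mem b hb =>
        obtain ⟨i, rfl⟩ := ha
        obtain ⟨j, rfl⟩ := hb
        exact key i j
      | zero => simpa using Submodule.zero_mem _
      | add u v _ _ ihu ihv => rw [mul_add]; exact add_mem ihu ihv
      | smul c u _ ihu => rw [mul_smul_comm]; exact Submodule.smul_mem _ _ ihu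
    | zero => intro y _; simpa using Submodule.zero_mem _
    | add u v _ _ ihu ihv => intro y hy; rw [add_mul]; exact add_mem (ihu y hy) (ihv y hy)
    | smul c u _ ihu => intro y hy; rw [smul_mul_assoc]; exact Submodule.smul_mem _ _ (ihu y hy)
  have hint : ∀ x ∈ Submodule.span ℤ (Set.range e), IsIntegral ℤ x := by
    let S : Subalgebra ℤ ℍ[ℚ, ((D / m : ℤ) : ℚ), (m : ℚ)] :=
      { carrier := Submodule.span ℤ (Set.range e)
        mul_mem' := fun ha hb => hmul _ ha _ hb
        one_mem' := hone
        add_mem' := fun ha hb => add_mem ha hb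
        zero_mem' := zero_mem _
        algebraMap_mem' := fun r => by
          rw [Algebra.algebraMap_eq_smul_one]
          exact Submodule.smul_mem _ _ hone }
    intro x hx
    exact IsIntegral.of_mem_of_fg S (Submodule.fg_span (Set.finite_range e)) x hx
  have hli : LinearIndependent ℚ e := by
    rw [Fintype.linearIndependent_iff]
    intro g hg
    have h0 := congrArg QuaternionAlgebra.re hg
    have h1 := congrArg QuaternionAlgebra.imI hg
    have h2' := congrArg QuaternionAlgebra.imJ hg
    have h3 := congrArg QuaternionAlgebra.imK hg
    simp only [he, Fin.sum_univ_four, Matrix.cons_val_zero, Matrix.cons_val_one,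
      Matrix.head_cons, Matrix.cons_val_two, Matrix.tail_cons, Matrix.cons_val_three,
      QuaternionAlgebra.re_add, QuaternionAlgebra.imI_add, QuaternionAlgebra.imJ_add,
      QuaternionAlgebra.imK_add, QuaternionAlgebra.re_smul, QuaternionAlgebra.imI_smul,
      QuaternionAlgebra.imJ_smul, QuaternionAlgebra.imK_smul, QuaternionAlgebra.re_one,
      QuaternionAlgebra.imI_one, QuaternionAlgebra.imJ_one, QuaternionAlgebra.imK_one,
      QuaternionAlgebra.re_zero, QuaternionAlgebra.imI_zero, QuaternionAlgebra.imJ_zero,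
      QuaternionAlgebra.imK_zero, smul_eq_mul] at h0 h1 h2' h3
    have hg0 : g 0 = 0 := by linarith
    have hg1 : g 1 = 0 := by linarith
    have hg2 : g 2 = 0 := by linarith
    have hg3 : g 3 = 0 := by linarith
    intro i
    fin_cases i
    exacts [hg0, hg1, hg2, hg3]
  refine ⟨hone, hmul, hint, hli, ?_, ?_⟩
  · exact hli.span_eq_top_of_card_eq_finrank
      (by simp [QuaternionAlgebra.finrank_eq_four])
  · have hdet : (Matrix.of fun a b => 2 * (e a * star (e b)).re).det
        = ((m : ℚ) * ((D / m : ℤ) : ℚ)) ^ 2 := by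
      rw [det_fin_four'']
      simp only [Matrix.of_apply, he, Matrix.cons_val_zero, Matrix.cons_val_one,
        Matrix.head_cons, Matrix.cons_val_two, Matrix.tail_cons, Matrix.cons_val_three,
        QuaternionAlgebra.re_mul, QuaternionAlgebra.re_star, QuaternionAlgebra.imI_star,
        QuaternionAlgebra.imJ_star, QuaternionAlgebra.imK_star, QuaternionAlgebra.re_one,
        QuaternionAlgebra.imI_one, QuaternionAlgebra.imJ_one, QuaternionAlgebra.imK_one]
      ring
    have hD' : (m : ℚ) * ((D / m : ℤ) : ℚ) = (D : ℚ) := by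
      rw [hDm]
      exact_mod_cast congrArg (fun z : ℤ => (z : ℚ)) hn.symm
    rw [hdet, hD', abs_of_nonneg (sq_nonneg _)]
end

section
/- In the quaternion algebra B = (D/m, m / ℚ) with m ≡ 1 mod 4 and D squarefree divisible by m, the lattice O = ℤ + ½(1 + j)ℤ + kℤ + ½(i + k)ℤ is an order of reduced discriminant D. -/
open Quaternion

set_option maxHeartbeats 1000000 in
/-- In the quaternion algebra `B = (D/m, m / ℚ)` (so `i² = D/m`, `j² = m`, `k = ij = -ji`)
with `D` positive squarefree, `m ∣ D`, and `m ≡ 1 mod 4`, the lattice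
`O = ℤ + ½(1+j)ℤ + kℤ + ½(i+k)ℤ` is an order of `B` of reduced discriminant `D`:
it contains 1, is closed under multiplication, consists of elements integral over `ℤ`,
is a full lattice (the four generators are a `ℚ`-basis of `B`), and the determinant of the
Gram matrix of reduced traces `trd(e_a ē_b)` has absolute value `D²`. -/
theorem stmt6 (D m : ℤ) (hD : 0 < D) (hsf : Squarefree D) (hm : m ∣ D)
    (hm4 : m % 4 = 1)
    (e : Fin 4 → ℍ[ℚ, ((D / m : ℤ) : ℚ), (m : ℚ)])
    (he : e = ![1, ⟨1/2, 0, 1/2, 0⟩, ⟨0, 0, 0, 1⟩, ⟨0, 1/2, 0, 1/2⟩]) :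
    (1 : ℍ[ℚ, ((D / m : ℤ) : ℚ), (m : ℚ)]) ∈ Submodule.span ℤ (Set.range e) ∧
    (∀ x ∈ Submodule.span ℤ (Set.range e), ∀ y ∈ Submodule.span ℤ (Set.range e),
      x * y ∈ Submodule.span ℤ (Set.range e)) ∧
    (∀ x ∈ Submodule.span ℤ (Set.range e), IsIntegral ℤ x) ∧
    LinearIndependent ℚ e ∧
    Submodule.span ℚ (Set.range e) = ⊤ ∧
    |(Matrix.of fun a b => 2 * (e a * star (e b)).re).det| = (D : ℚ) ^ 2 := by
  have hm0 : m ≠ 0 := by omega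
  obtain ⟨q, hq⟩ := hm
  have hq' : ((D / m : ℤ) : ℚ) = (q : ℚ) := by
    rw [hq, Int.mul_ediv_cancel_left _ hm0]
  obtain ⟨t, ht⟩ : (4:ℤ) ∣ m - 1 := by omega
  have hmt : m = 4*t + 1 := by omega
  set P := Submodule.span ℤ (Set.range e) with hP
  have mem : ∀ i, e i ∈ P := fun i => Submodule.subset_span (Set.mem_range_self i)
  have he0 : e 0 = 1 := by simp [he]
  have h1 : (1 : ℍ[ℚ, ((D / m : ℤ) : ℚ), (m : ℚ)]) ∈ P := he0 ▸ mem 0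
  -- multiplication table
  have tab : ∀ a b : Fin 4, e a * e b ∈ P := by
    have E : ∀ (a b : Fin 4) (c₀ c₁ c₂ c₃ : ℤ),
        e a * e b = (c₀:ℚ) • e 0 + (c₁:ℚ) • e 1 + (c₂:ℚ) • e 2 + (c₃:ℚ) • e 3 →
        e a * e b ∈ P := by
      intro a b c₀ c₁ c₂ c₃ hE
      rw [hE, Int.cast_smul_eq_zsmul ℚ, Int.cast_smul_eq_zsmul ℚ, Int.cast_smul_eq_zsmul ℚ,
        Int.cast_smul_eq_zsmul ℚ]
      exact P.add_mem (P.add_mem (P.add_mem (P.smul_mem _ (mem 0)) (P.smul_mem _ (mem 1)))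
        (P.smul_mem _ (mem 2))) (P.smul_mem _ (mem 3))
    intro a b
    fin_cases a <;> fin_cases b
    · exact E 0 0 1 0 0 0 (by ext <;> simp [he, QuaternionAlgebra.re_smul,
        QuaternionAlgebra.imI_smul, QuaternionAlgebra.imJ_smul, QuaternionAlgebra.imK_smul,
        smul_eq_mul, hq'] <;> push_cast [hmt] <;> ring)
    · exact E 0 1 0 1 0 0 (by ext <;> simp [he, QuaternionAlgebra.re_smul,
        QuaternionAlgebra.imI_smul, QuaternionAlgebra.imJ_smul, QuaternionAlgebra.imK_smul,
        smul_eq_mul, hq'] <;> push_cast [hmt] <;> ring)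
    · exact E 0 2 0 0 1 0 (by ext <;> simp [he, QuaternionAlgebra.re_smul,
        QuaternionAlgebra.imI_smul, QuaternionAlgebra.imJ_smul, QuaternionAlgebra.imK_smul,
        smul_eq_mul, hq'] <;> push_cast [hmt] <;> ring)
    · exact E 0 3 0 0 0 1 (by ext <;> simp [he, QuaternionAlgebra.re_smul,
        QuaternionAlgebra.imI_smul, QuaternionAlgebra.imJ_smul, QuaternionAlgebra.imK_smul,
        smul_eq_mul, hq'] <;> push_cast [hmt] <;> ring)
    · exact E 1 0 0 1 0 0 (by ext <;> simp [he, QuaternionAlgebra.re_smul,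
        QuaternionAlgebra.imI_smul, QuaternionAlgebra.imJ_smul, QuaternionAlgebra.imK_smul,
        smul_eq_mul, hq'] <;> push_cast [hmt] <;> ring)
    · exact E 1 1 t 1 0 0 (by ext <;> simp [he, QuaternionAlgebra.re_smul,
        QuaternionAlgebra.imI_smul, QuaternionAlgebra.imJ_smul, QuaternionAlgebra.imK_smul,
        smul_eq_mul, hq'] <;> push_cast [hmt] <;> ring)
    · exact E 1 2 0 0 (2*t+1) (-m) (by ext <;> simp [he, QuaternionAlgebra.re_smul,
        QuaternionAlgebra.imI_smul, QuaternionAlgebra.imJ_smul, QuaternionAlgebra.imK_smul,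
        smul_eq_mul, hq'] <;> push_cast [hmt] <;> ring)
    · exact E 1 3 0 0 t (-2*t) (by ext <;> simp [he, QuaternionAlgebra.re_smul,
        QuaternionAlgebra.imI_smul, QuaternionAlgebra.imJ_smul, QuaternionAlgebra.imK_smul,
        smul_eq_mul, hq'] <;> push_cast [hmt] <;> ring)
    · exact E 2 0 0 0 1 0 (by ext <;> simp [he, QuaternionAlgebra.re_smul,
        QuaternionAlgebra.imI_smul, QuaternionAlgebra.imJ_smul, QuaternionAlgebra.imK_smul,
        smul_eq_mul, hq'] <;> push_cast [hmt] <;> ring)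
    · exact E 2 1 0 0 (-2*t) m (by ext <;> simp [he, QuaternionAlgebra.re_smul,
        QuaternionAlgebra.imI_smul, QuaternionAlgebra.imJ_smul, QuaternionAlgebra.imK_smul,
        smul_eq_mul, hq'] <;> push_cast [hmt] <;> ring)
    · exact E 2 2 (-(m*q)) 0 0 0 (by ext <;> simp [he, QuaternionAlgebra.re_smul,
        QuaternionAlgebra.imI_smul, QuaternionAlgebra.imJ_smul, QuaternionAlgebra.imK_smul,
        smul_eq_mul, hq'] <;> push_cast [hmt] <;> ring)
    · exact E 2 3 (-2*q*t) (-q) 0 0 (by ext <;> simp [he, QuaternionAlgebra.re_smul,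
        QuaternionAlgebra.imI_smul, QuaternionAlgebra.imJ_smul, QuaternionAlgebra.imK_smul,
        smul_eq_mul, hq'] <;> push_cast [hmt] <;> ring)
    · exact E 3 0 0 0 0 1 (by ext <;> simp [he, QuaternionAlgebra.re_smul,
        QuaternionAlgebra.imI_smul, QuaternionAlgebra.imJ_smul, QuaternionAlgebra.imK_smul,
        smul_eq_mul, hq'] <;> push_cast [hmt] <;> ring)
    · exact E 3 1 0 0 (-t) (2*t+1) (by ext <;> simp [he, QuaternionAlgebra.re_smul,
        QuaternionAlgebra.imI_smul, QuaternionAlgebra.imJ_smul, QuaternionAlgebra.imK_smul,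
        smul_eq_mul, hq'] <;> push_cast [hmt] <;> ring)
    · exact E 3 2 (-(q*(2*t+1))) q 0 0 (by ext <;> simp [he, QuaternionAlgebra.re_smul,
        QuaternionAlgebra.imI_smul, QuaternionAlgebra.imJ_smul, QuaternionAlgebra.imK_smul,
        smul_eq_mul, hq'] <;> push_cast [hmt] <;> ring)
    · exact E 3 3 (-(q*t)) 0 0 0 (by ext <;> simp [he, QuaternionAlgebra.re_smul,
        QuaternionAlgebra.imI_smul, QuaternionAlgebra.imJ_smul, QuaternionAlgebra.imK_smul,
        smul_eq_mul, hq'] <;> push_cast [hmt] <;> ring)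
  have hmul : ∀ x ∈ P, ∀ y ∈ P, x * y ∈ P := by
    intro x hx y hy
    induction hx using Submodule.span_induction generalizing y with
    | mem x' hx' =>
      obtain ⟨a, rfl⟩ := hx'
      induction hy using Submodule.span_induction with
      | mem y' hy' => obtain ⟨b, rfl⟩ := hy'; exact tab a b
      | zero => simpa using P.zero_mem
      | add y z _ _ h1 h2 => rw [mul_add]; exact P.add_mem h1 h2
      | smul n y _ h1 => rw [mul_smul_comm]; exact P.smul_mem _ h1
    | zero => simpa using P.zero_mem
    | add x' z _ _ h1 h2 => rw [add_mul]; exact P.add_mem (h1 y hy) (h2 y hy)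
    | smul n x' _ h1 => rw [smul_mul_assoc]; exact P.smul_mem _ (h1 y hy)
  refine ⟨h1, hmul, ?_, ?_, ?_, ?_⟩
  · -- integrality
    intro x hx
    have : x ∈ Submodule.toSubalgebra P h1 (fun a b ha hb => hmul a ha b hb) := hx
    exact IsIntegral.of_mem_of_fg _ (Submodule.fg_span (Set.finite_range e)) x this
  · -- linear independence
    rw [Fintype.linearIndependent_iff]
    intro g hg
    rw [Fin.sum_univ_four] at hg
    simp only [he] at hg
    rw [QuaternionAlgebra.ext_iff] at hg
    obtain ⟨h1', h2', h3', h4'⟩ := hg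
    simp [QuaternionAlgebra.re_smul, QuaternionAlgebra.imI_smul, QuaternionAlgebra.imJ_smul,
      QuaternionAlgebra.imK_smul, smul_eq_mul] at h1' h2' h3' h4'
    intro i
    fin_cases i <;> simp <;> linarith
  · -- span top
    rw [eq_top_iff]
    rintro x -
    have hx : x = (x.re - x.imJ) • e 0 + (2*x.imJ) • e 1 + (x.imK - x.imI) • e 2
        + (2*x.imI) • e 3 := by
      ext <;> simp [he, QuaternionAlgebra.re_smul, QuaternionAlgebra.imI_smul,
        QuaternionAlgebra.imJ_smul, QuaternionAlgebra.imK_smul, smul_eq_mul] <;> ring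
    rw [hx]
    have mq : ∀ i, e i ∈ Submodule.span ℚ (Set.range e) :=
      fun i => Submodule.subset_span (Set.mem_range_self i)
    exact Submodule.add_mem _ (Submodule.add_mem _ (Submodule.add_mem _
      (Submodule.smul_mem _ _ (mq 0)) (Submodule.smul_mem _ _ (mq 1)))
      (Submodule.smul_mem _ _ (mq 2))) (Submodule.smul_mem _ _ (mq 3))
  · -- determinant
    have hDq : (D : ℚ) = (m : ℚ) * (q : ℚ) := by exact_mod_cast hq
    have hdet : (Matrix.of fun a b => 2 * (e a * star (e b)).re).det = (D : ℚ) ^ 2 := by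
      simp [he, hq', Matrix.det_succ_row_zero, Fin.sum_univ_succ, Fin.succAbove, QuaternionAlgebra.re_mul]
      rw [hDq]
      ring
    rw [hdet, abs_of_nonneg (by positivity)]
end
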